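/- Let γ < 1, T > 0, B ≥ 0, and let (f_s)_{s∈[0,T]} be a family of positive Borel measures on (0,∞) such that s ↦ f_s(A) is measurable for every Borel set A, and such that for every R > 0 and every t ∈ [0,T]: ∫_0^t ( (1/R) ∫_{[R/2,R]} R^{(3+γ)/2} f_s(dx) )² ds ≤ B. Then for every t ∈ [0,T] and every x₀ > 0: ∫_0^t ∫_{(0,x₀]} x f_s(dx) ds ≤ ( t^{1/2} · B^{1/2} / (1 − 2^{−(1−γ)/2}) ) · x₀^{(1−γ)/2}. -/

import Mathlib

open MeasureTheory Set ENNReal Filter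

/-- Lemma 4.4 of the paper, abstract form: if the squared
time-integrated averaged moments of a measurable family `(f_s)` are bounded by
`B` uniformly in the dyadic scale, then the time-integrated mass near zero
satisfies
`∫_0^t ∫_{(0,x₀]} x f_s(dx) ds ≤ (√t·√B/(1 - 2^{-(1-γ)/2}))·x₀^{(1-γ)/2}`. -/
theorem no_mass_near_zero_from_dyadic_bound
    (γ T B : ℝ) (hγ : γ < 1) (hT : 0 < T) (hB : 0 ≤ B)
    (f : ℝ → Measure ℝ)
    (hmeas : ∀ A : Set ℝ, MeasurableSet A → Measurable (fun s => f s A))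
    (hbound : ∀ R > (0:ℝ), ∀ t ∈ Icc (0:ℝ) T,
      (∫⁻ s in Icc (0:ℝ) t,
          ((ENNReal.ofReal R)⁻¹ *
            ∫⁻ x in Icc (R / 2) R,
              ENNReal.ofReal (R ^ ((3 + γ) / 2)) ∂(f s)) ^ 2)
        ≤ ENNReal.ofReal B) :
    ∀ t ∈ Icc (0:ℝ) T, ∀ x₀ > (0:ℝ),
      (∫⁻ s in Icc (0:ℝ) t, ∫⁻ x in Ioc (0:ℝ) x₀, ENNReal.ofReal x ∂(f s))
        ≤ ENNReal.ofReal
            (Real.sqrt t * Real.sqrt B / (1 - 2 ^ (-(1 - γ) / 2))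
              * x₀ ^ ((1 - γ) / 2)) := by
  intro t ht x₀ hx₀
  have ht0 : 0 ≤ t := ht.1
  set e : ℝ := (1 - γ) / 2 with he
  have he_pos : (0:ℝ) < e := by rw [he]; linarith
  set r : ℝ := 2 ^ (-(1 - γ) / 2) with hr
  have hr_pos : 0 < r := Real.rpow_pos_of_pos two_pos _
  have hr_lt : r < 1 := Real.rpow_lt_one_of_one_lt_of_neg one_lt_two (by linarith)
  set R : ℕ → ℝ := fun k => x₀ / 2 ^ k with hR
  have hRpos : ∀ k, 0 < R k := fun k => div_pos hx₀ (pow_pos two_pos k)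
  have hRsucc : ∀ k, R (k + 1) = R k / 2 := by
    intro k; simp only [hR, pow_succ, div_div]
  -- interval set per scale
  set I : ℕ → Set ℝ := fun k => Icc (R k / 2) (R k) with hI
  -- Step A: pointwise (in s) dyadic decomposition bound
  have stepA : ∀ s,
      (∫⁻ x in Ioc (0:ℝ) x₀, ENNReal.ofReal x ∂(f s))
        ≤ ∑' k : ℕ, ENNReal.ofReal (R k) * f s (I k) := by
    intro s
    have hsub : Ioc (0:ℝ) x₀ ⊆ ⋃ k : ℕ, Ioc (R (k + 1)) (R k) := by
      intro x hx
      have hx0 : (0:ℝ) < x := hx.1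
      have hx1 : x ≤ x₀ := hx.2
      have hex : ∃ n : ℕ, R (n + 1) < x := by
        obtain ⟨n, hn⟩ := pow_unbounded_of_one_lt (x₀ / x) (one_lt_two (α := ℝ))
        refine ⟨n, ?_⟩
        have h2 : x₀ / x < 2 ^ (n + 1) := by
          calc x₀ / x < 2 ^ n := hn
            _ ≤ 2 ^ (n + 1) := by
              exact pow_le_pow_right₀ one_le_two (Nat.le_succ n)
        rw [hR]
        rw [div_lt_iff₀ (pow_pos two_pos _)]
        rw [div_lt_iff₀ hx0] at h2
        linarith [h2]
      refine mem_iUnion.2 ⟨Nat.find hex, Nat.find_spec hex, ?_⟩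
      rcases Nat.eq_zero_or_pos (Nat.find hex) with h0 | hpos
      · rw [h0]; simpa [hR] using hx1
      · obtain ⟨m, hm⟩ := Nat.exists_eq_succ_of_ne_zero hpos.ne'
        rw [hm]
        exact not_lt.mp (Nat.find_min hex (by omega))
    calc (∫⁻ x in Ioc (0:ℝ) x₀, ENNReal.ofReal x ∂(f s))
        ≤ ∫⁻ x in ⋃ k : ℕ, Ioc (R (k + 1)) (R k), ENNReal.ofReal x ∂(f s) :=
          lintegral_mono_set hsub
      _ ≤ ∑' k : ℕ, ∫⁻ x in Ioc (R (k + 1)) (R k), ENNReal.ofReal x ∂(f s) :=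
          lintegral_iUnion_le _ _
      _ ≤ ∑' k : ℕ, ENNReal.ofReal (R k) * f s (I k) := by
          refine ENNReal.tsum_le_tsum fun k => ?_
          calc (∫⁻ x in Ioc (R (k + 1)) (R k), ENNReal.ofReal x ∂(f s))
              ≤ ∫⁻ _ in Ioc (R (k + 1)) (R k), ENNReal.ofReal (R k) ∂(f s) := by
                refine setLIntegral_mono' measurableSet_Ioc fun x hx => ?_
                exact ENNReal.ofReal_le_ofReal hx.2
            _ = ENNReal.ofReal (R k) * f s (Ioc (R (k + 1)) (R k)) := by
                rw [setLIntegral_const]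
            _ ≤ ENNReal.ofReal (R k) * f s (I k) := by
                refine mul_le_mul_of_nonneg_left (measure_mono ?_) (zero_le)
                rw [hRsucc, hI]
                exact Ioc_subset_Icc_self
  -- Step C: bound for each dyadic scale
  have stepC : ∀ k : ℕ,
      (∫⁻ s in Icc (0:ℝ) t, ENNReal.ofReal (R k) * f s (I k))
        ≤ ENNReal.ofReal (R k ^ e * (Real.sqrt B * Real.sqrt t)) := by
    intro k
    have hRk := hRpos k
    set g : ℝ → ℝ≥0∞ := fun s => ENNReal.ofReal (R k ^ ((1 + γ) / 2)) * f s (I k)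
      with hg
    have hgmeas : Measurable g := (hmeas (I k) measurableSet_Icc).const_mul _
    -- identify g with the integrand of the hypothesis
    have hgeq : ∀ s, g s =
        (ENNReal.ofReal (R k))⁻¹ *
          ∫⁻ x in Icc (R k / 2) (R k), ENNReal.ofReal (R k ^ ((3 + γ) / 2)) ∂(f s) := by
      intro s
      rw [setLIntegral_const]
      have h3 : R k ^ ((3 + γ) / 2) = R k * R k ^ ((1 + γ) / 2) := by
        rw [show (3 + γ) / 2 = 1 + (1 + γ) / 2 by ring, Real.rpow_add hRk, Real.rpow_one]
      rw [h3, ENNReal.ofReal_mul hRk.le, mul_assoc, ← mul_assoc ((ENNReal.ofReal (R k))⁻¹),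
        ENNReal.inv_mul_cancel (ENNReal.ofReal_pos.2 hRk).ne' ENNReal.ofReal_ne_top, one_mul]
    -- the squared time integral of g is bounded by B
    have hgB : (∫⁻ s in Icc (0:ℝ) t, g s ^ 2) ≤ ENNReal.ofReal B := by
      calc (∫⁻ s in Icc (0:ℝ) t, g s ^ 2)
          = ∫⁻ s in Icc (0:ℝ) t,
              ((ENNReal.ofReal (R k))⁻¹ *
                ∫⁻ x in Icc (R k / 2) (R k),
                  ENNReal.ofReal (R k ^ ((3 + γ) / 2)) ∂(f s)) ^ 2 := by
            refine lintegral_congr fun s => ?_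
            rw [hgeq s]
        _ ≤ ENNReal.ofReal B := hbound (R k) hRk t ht
    -- Cauchy–Schwarz
    have hCS : (∫⁻ s in Icc (0:ℝ) t, g s) ≤ ENNReal.ofReal (Real.sqrt B * Real.sqrt t) := by
      have hpq : Real.HolderConjugate 2 2 := Real.holderConjugate_iff.mpr ⟨one_lt_two, by norm_num⟩
      have := ENNReal.lintegral_mul_le_Lp_mul_Lq (volume.restrict (Icc (0:ℝ) t)) hpq
        hgmeas.aemeasurable (aemeasurable_const (b := (1:ℝ≥0∞)))
      simp only [Pi.mul_apply, mul_one, one_pow] at this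
      have h1 : (∫⁻ _ in Icc (0:ℝ) t, (1:ℝ≥0∞) ^ (2:ℝ)) = ENNReal.ofReal t := by
        simp [Real.volume_Icc, ht0]
      have h2 : (∫⁻ s in Icc (0:ℝ) t, g s ^ (2:ℝ)) = ∫⁻ s in Icc (0:ℝ) t, g s ^ 2 := by
        refine lintegral_congr fun s => ?_
        rw [← ENNReal.rpow_natCast (g s) 2]; norm_num
      calc (∫⁻ s in Icc (0:ℝ) t, g s)
          ≤ (∫⁻ s in Icc (0:ℝ) t, g s ^ (2:ℝ)) ^ ((1:ℝ)/2) *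
              (∫⁻ _ in Icc (0:ℝ) t, (1:ℝ≥0∞) ^ (2:ℝ)) ^ ((1:ℝ)/2) := by
            simpa using this
        _ ≤ (ENNReal.ofReal B) ^ ((1:ℝ)/2) * (ENNReal.ofReal t) ^ ((1:ℝ)/2) := by
            rw [h1, h2]
            exact mul_le_mul_of_nonneg_right (ENNReal.rpow_le_rpow hgB (by norm_num)) (zero_le)
        _ = ENNReal.ofReal (Real.sqrt B * Real.sqrt t) := by
            rw [ENNReal.ofReal_rpow_of_nonneg hB (by norm_num),
              ENNReal.ofReal_rpow_of_nonneg ht0 (by norm_num),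
              ← ENNReal.ofReal_mul (by positivity)]
            rw [Real.sqrt_eq_rpow, Real.sqrt_eq_rpow]
    -- put things together
    have hsplit : ∀ s, ENNReal.ofReal (R k) * f s (I k) = ENNReal.ofReal (R k ^ e) * g s := by
      intro s
      rw [hg]
      rw [← mul_assoc, ← ENNReal.ofReal_mul (Real.rpow_nonneg hRk.le _)]
      congr 2
      rw [← Real.rpow_add hRk]
      rw [he]; ring_nf
      rw [Real.rpow_one]
    calc (∫⁻ s in Icc (0:ℝ) t, ENNReal.ofReal (R k) * f s (I k))
        = ∫⁻ s in Icc (0:ℝ) t, ENNReal.ofReal (R k ^ e) * g s := by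
          exact lintegral_congr fun s => hsplit s
      _ = ENNReal.ofReal (R k ^ e) * ∫⁻ s in Icc (0:ℝ) t, g s :=
          lintegral_const_mul' _ _ ENNReal.ofReal_ne_top
      _ ≤ ENNReal.ofReal (R k ^ e) * ENNReal.ofReal (Real.sqrt B * Real.sqrt t) :=
          mul_le_mul_of_nonneg_left hCS (zero_le)
      _ = ENNReal.ofReal (R k ^ e * (Real.sqrt B * Real.sqrt t)) :=
          (ENNReal.ofReal_mul (Real.rpow_nonneg hRk.le _)).symm
  -- geometric identity for the radii
  have hRe : ∀ k : ℕ, R k ^ e = x₀ ^ e * r ^ k := by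
    intro k
    rw [hR]
    rw [Real.div_rpow hx₀.le (pow_nonneg two_pos.le _)]
    rw [div_eq_mul_inv]
    congr 1
    rw [hr, ← Real.rpow_natCast (2:ℝ) k, ← Real.rpow_mul two_pos.le,
      ← Real.rpow_neg two_pos.le,
      ← Real.rpow_natCast ((2:ℝ) ^ (-(1 - γ) / 2)) k, ← Real.rpow_mul two_pos.le]
    congr 1
    rw [he]; ring
  -- assemble everything
  calc (∫⁻ s in Icc (0:ℝ) t, ∫⁻ x in Ioc (0:ℝ) x₀, ENNReal.ofReal x ∂(f s))
      ≤ ∫⁻ s in Icc (0:ℝ) t, ∑' k : ℕ, ENNReal.ofReal (R k) * f s (I k) :=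
        lintegral_mono fun s => stepA s
    _ = ∑' k : ℕ, ∫⁻ s in Icc (0:ℝ) t, ENNReal.ofReal (R k) * f s (I k) :=
        lintegral_tsum fun k =>
          ((hmeas (I k) measurableSet_Icc).const_mul _).aemeasurable
    _ ≤ ∑' k : ℕ, ENNReal.ofReal (R k ^ e * (Real.sqrt B * Real.sqrt t)) :=
        ENNReal.tsum_le_tsum fun k => stepC k
    _ = ∑' k : ℕ, ENNReal.ofReal (x₀ ^ e * (Real.sqrt B * Real.sqrt t)) *
          ENNReal.ofReal (r ^ k) := by
        refine tsum_congr fun k => ?_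
        rw [hRe k, ← ENNReal.ofReal_mul (by positivity)]
        congr 1
        ring
    _ = ENNReal.ofReal (x₀ ^ e * (Real.sqrt B * Real.sqrt t)) *
          ∑' k : ℕ, ENNReal.ofReal (r ^ k) := ENNReal.tsum_mul_left
    _ = ENNReal.ofReal (x₀ ^ e * (Real.sqrt B * Real.sqrt t)) *
          ENNReal.ofReal ((1 - r)⁻¹) := by
        congr 1
        rw [← ENNReal.ofReal_tsum_of_nonneg (fun k => pow_nonneg hr_pos.le k)
          (summable_geometric_of_lt_one hr_pos.le hr_lt)]
        rw [tsum_geometric_of_lt_one hr_pos.le hr_lt]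
    _ = ENNReal.ofReal
          (Real.sqrt t * Real.sqrt B / (1 - r) * x₀ ^ e) := by
        rw [← ENNReal.ofReal_mul (by positivity)]
        congr 1
        rw [div_eq_mul_inv]
        ring
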